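/- Let H be a complex Hilbert space and let F be a von Neumann algebra on H which is a factor, in the sense that every element of F commuting with all elements of F is a complex scalar multiple of the identity. Let V be a unitary operator on H such that the map θ(b) = V b V* sends F onto F (so θ is an automorphism of F). Suppose a ∈ F satisfies a·θ(b) = b·a for all b ∈ F. Then: (i) a*·a = c·I and a·a* = c·I for some nonnegative real scalar c; and (ii) if a ≠ 0, then θ is inner on F: there is a unitary u ∈ F (namely u = c^{-1/2}·a) such that θ(b) = u*·b·u for all b ∈ F. Consequently, if θ is an outer automorphism of the factor F (not implemented by any unitary of F), then a = 0. (This is the key step in the paper's proof that the crossed product ℱ ⋊_θ (𝔖_p×𝔖_q) is a factor and that (ℱ^G)′ ∩ ℱ = ℂ·I: a central element Σ_g Π_θ(a_g)λ_g forces a_g·θ_g(b) = b·a_g for all b ∈ ℱ, hence a_g*a_g ∈ ℱ ∩ ℱ′ = ℂ·I and a_g = 0 for g ≠ e by outerness.) -/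

import Mathlib

/-- Let `F` be a von Neumann algebra on a complex Hilbert space `H` which is a factor, let
`V` be a unitary on `H` such that `θ b = V b V*` maps `F` onto `F`, and let `a ∈ F` satisfy
`a * θ b = b * a` for all `b ∈ F`.  Then `a* a` and `a a*` are a common nonnegative scalar
multiple of the identity; if `a ≠ 0` then `θ` is inner on `F`; and consequently if `θ` is
outer then `a = 0`. -/
theorem twisted_centralizer_element_of_factor
    {H : Type*} [NormedAddCommGroup H] [InnerProductSpace ℂ H] [CompleteSpace H]
    (F : VonNeumannAlgebra H)
    (hfactor : ∀ x ∈ F, (∀ y ∈ F, x * y = y * x) → ∃ c : ℂ, x = c • (1 : H →L[ℂ] H))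
    (V : H →L[ℂ] H) (hV : V ∈ unitary (H →L[ℂ] H))
    (hθ : ∀ b ∈ F, V * b * star V ∈ F)
    (hθ' : ∀ b ∈ F, star V * b * V ∈ F)
    (a : H →L[ℂ] H) (haF : a ∈ F)
    (ha : ∀ b ∈ F, a * (V * b * star V) = b * a) :
    (∃ c : ℝ, 0 ≤ c ∧ star a * a = (c : ℂ) • (1 : H →L[ℂ] H) ∧
        a * star a = (c : ℂ) • (1 : H →L[ℂ] H)) ∧
    (a ≠ 0 → ∃ u : H →L[ℂ] H, u ∈ F ∧ u ∈ unitary (H →L[ℂ] H) ∧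
        ∀ b ∈ F, V * b * star V = star u * b * u) ∧
    ((¬ ∃ u : H →L[ℂ] H, u ∈ F ∧ u ∈ unitary (H →L[ℂ] H) ∧
        ∀ b ∈ F, V * b * star V = star u * b * u) → a = 0) := by
  have hVV : V * star V = 1 := hV.2
  -- the starred relation: θ(b) * a* = a* * b for all b ∈ F
  have ha' : ∀ b ∈ F, (V * b * star V) * star a = star a * b := by
    intro b hb
    have h := congrArg star (ha (star b) (star_mem hb))
    simp only [star_mul, star_star] at h
    calc V * b * star V * star a = V * (b * (star V * star a)) := by noncomm_ring
      _ = star a * b := by rw [← mul_assoc b, ← mul_assoc V, h]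
  by_cases ha0 : a = 0
  · subst ha0
    refine ⟨⟨0, le_refl 0, by simp, by simp⟩, fun h => absurd rfl h, fun _ => rfl⟩
  -- star a * a commutes with F
  have hcomm1 : ∀ b ∈ F, (star a * a) * b = b * (star a * a) := by
    intro b hb
    have hb' : star V * b * V ∈ F := hθ' b hb
    have hb2 : V * (star V * b * V) * star V = b := by
      calc V * (star V * b * V) * star V = (V * star V) * b * (V * star V) := by noncomm_ring
        _ = b := by rw [hVV, one_mul, mul_one]
    have e1 : a * b = (star V * b * V) * a := by
      have := ha _ hb'; rw [hb2] at this; exact this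
    have e2 : star a * (star V * b * V) = b * star a := by
      have := ha' _ hb'; rw [hb2] at this; exact this.symm
    calc star a * a * b = star a * (a * b) := by noncomm_ring
      _ = star a * ((star V * b * V) * a) := by rw [e1]
      _ = (star a * (star V * b * V)) * a := by noncomm_ring
      _ = (b * star a) * a := by rw [e2]
      _ = b * (star a * a) := by noncomm_ring
  -- a * star a commutes with F
  have hcomm2 : ∀ b ∈ F, (a * star a) * b = b * (a * star a) := by
    intro b hb
    calc a * star a * b = a * (star a * b) := by noncomm_ring
      _ = a * ((V * b * star V) * star a) := by rw [ha' b hb]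
      _ = (a * (V * b * star V)) * star a := by noncomm_ring
      _ = (b * a) * star a := by rw [ha b hb]
      _ = b * (a * star a) := by noncomm_ring
  obtain ⟨c₁, hc₁⟩ := hfactor _ (mul_mem (star_mem haF) haF) hcomm1
  obtain ⟨c₂, hc₂⟩ := hfactor _ (mul_mem haF (star_mem haF)) hcomm2
  -- c₁ = c₂
  have hcc : c₁ = c₂ := by
    have h1 : a * (star a * a) = c₁ • a := by rw [hc₁]; simp [mul_smul_comm]
    have h2 : (a * star a) * a = c₂ • a := by rw [hc₂]; simp [smul_mul_assoc]
    have h3 : (c₁ - c₂) • a = 0 := by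
      rw [sub_smul, ← h1, ← h2, mul_assoc, sub_self]
    rcases smul_eq_zero.mp h3 with h | h
    · exact sub_eq_zero.mp h
    · exact absurd h ha0
  -- find x with a x ≠ 0
  obtain ⟨x, hx⟩ : ∃ x, a x ≠ 0 := by
    by_contra h
    push_neg at h
    exact ha0 (ContinuousLinearMap.ext fun x => by simp [h x])
  have hxne : x ≠ 0 := fun h => hx (by simp [h])
  have hxnorm : ‖x‖ ≠ 0 := norm_ne_zero_iff.mpr hxne
  have hxC : (‖x‖ : ℂ) ≠ 0 := by exact_mod_cast hxnorm
  -- c₁ is real nonneg: c₁ * ‖x‖² = ‖a x‖²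
  have hax : (star a) (a x) = c₁ • x := by
    have := congrArg (fun T : H →L[ℂ] H => T x) hc₁
    simpa using this
  have key : c₁ * (‖x‖:ℂ)^2 = (‖a x‖:ℂ)^2 := by
    have k1 : (inner ℂ x ((star a) (a x)) : ℂ) = c₁ * (‖x‖:ℂ)^2 := by
      rw [hax, inner_smul_right, inner_self_eq_norm_sq_to_K]; norm_cast
    have k2 : (inner ℂ x ((star a) (a x)) : ℂ) = (‖a x‖:ℂ)^2 := by
      rw [ContinuousLinearMap.star_eq_adjoint, ContinuousLinearMap.adjoint_inner_right,
        inner_self_eq_norm_sq_to_K]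
      norm_cast
    rw [← k1, k2]
  set c : ℝ := (‖a x‖ / ‖x‖)^2 with hcdef
  have haxp : 0 < ‖a x‖ := norm_pos_iff.mpr hx
  have hc0 : 0 < c := by positivity
  have hcc₁ : (c : ℂ) = c₁ := by
    have h1 : c₁ = (‖a x‖:ℂ)^2 / (‖x‖:ℂ)^2 := by
      rw [eq_div_iff (pow_ne_zero 2 hxC)]; exact key
    rw [h1, hcdef]
    push_cast
    rw [div_pow]
  have hA : star a * a = (c : ℂ) • (1 : H →L[ℂ] H) := by rw [hcc₁]; exact hc₁
  have hB : a * star a = (c : ℂ) • (1 : H →L[ℂ] H) := by rw [hcc₁, hcc]; exact hc₂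
  -- build the unitary
  set s : ℝ := Real.sqrt c with hsdef
  have hs2r : s * s = c := Real.mul_self_sqrt hc0.le
  have hs2 : (s:ℂ) * (s:ℂ) = (c:ℂ) := by exact_mod_cast hs2r
  have hs0 : (s:ℂ) ≠ 0 := by
    have : s ≠ 0 := Real.sqrt_ne_zero'.mpr hc0
    exact_mod_cast this
  set u : H →L[ℂ] H := ((s:ℂ))⁻¹ • a with hudef
  have hus : star u = ((s:ℂ))⁻¹ • star a := by
    rw [hudef, star_smul, star_inv₀, Complex.star_def, Complex.conj_ofReal]
  have huF : u ∈ F := F.toStarSubalgebra.smul_mem haF _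
  have hcancel : ((s:ℂ))⁻¹ * ((s:ℂ))⁻¹ * (c:ℂ) = 1 := by
    rw [← hs2]
    field_simp
  have huu : star u * u = 1 := by
    rw [hus, hudef, smul_mul_smul_comm, hA, smul_smul, hcancel, one_smul]
  have huu' : u * star u = 1 := by
    rw [hus, hudef, smul_mul_smul_comm, hB, smul_smul, hcancel, one_smul]
  have hinner : ∀ b ∈ F, V * b * star V = star u * b * u := by
    intro b hb
    have e : star a * (b * a) = (c:ℂ) • (V * b * star V) := by
      rw [← ha b hb, ← mul_assoc, hA, smul_mul_assoc, one_mul]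
    have e2 : star u * b * u = ((s:ℂ)⁻¹ * (s:ℂ)⁻¹) • (star a * (b * a)) := by
      rw [hus, hudef, smul_mul_assoc, smul_mul_assoc, mul_smul_comm, smul_smul, mul_assoc]
    rw [e2, e, smul_smul, hcancel, one_smul]
  refine ⟨⟨c, hc0.le, hA, hB⟩, fun _ => ⟨u, huF, Unitary.mem_iff.mpr ⟨huu, huu'⟩, hinner⟩,
    fun hno => absurd ⟨u, huF, Unitary.mem_iff.mpr ⟨huu, huu'⟩, hinner⟩ hno⟩
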